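/- Let Φ = (G, φ) be a T-gain graph on a connected bipartite graph G. Then Φ is distance compatible if and only if Φ is balanced. -/

import Mathlib

open Matrix
open scoped Classical

noncomputable section

namespace GG

variable {V : Type*}

/-- The gain of a walk: product of the gains of its oriented edges. -/
def walkGain {G : SimpleGraph V} (φ : V → V → ℂ) {u v : V} (p : G.Walk u v) : ℂ :=
  (p.darts.map (fun d => φ d.toProd.1 d.toProd.2)).prod

/-- `φ` is a `𝕋`-gain function on `G`: unit modulus on edges, inverse under reversal. -/
def IsGain (G : SimpleGraph V) (φ : V → V → ℂ) : Prop :=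
  (∀ i j, G.Adj i j → ‖φ i j‖ = 1) ∧ (∀ i j, G.Adj i j → φ j i = (φ i j)⁻¹)

/-- Adjacency matrix of a gain graph. -/
def gainAdj [Fintype V] [DecidableEq V] (G : SimpleGraph V) (φ : V → V → ℂ) :
    Matrix V V ℂ := fun i j => if G.Adj i j then φ i j else 0

/-- A gain graph is balanced if every cycle has gain 1. -/
def GBalanced (G : SimpleGraph V) (φ : V → V → ℂ) : Prop :=
  ∀ (u : V) (c : G.Walk u u), c.IsCycle → walkGain φ c = 1

/-- All shortest paths between any pair of vertices have the same gain. -/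
def DistCompatible (G : SimpleGraph V) (φ : V → V → ℂ) : Prop :=
  ∀ (s t : V) (p q : G.Walk s t), p.length = G.dist s t → q.length = G.dist s t →
    walkGain φ p = walkGain φ q

/-- The set of gains of shortest `s`-`t` paths. -/
def shortestGains (G : SimpleGraph V) (φ : V → V → ℂ) (s t : V) : Set ℂ :=
  {z | ∃ p : G.Walk s t, p.length = G.dist s t ∧ walkGain φ p = z}

/-- The element of `S` maximizing the real part, ties broken by maximal imaginary part
(correct for finite nonempty sets of gains). -/
def lexMaxGain (S : Set ℂ) : ℂ :=
  ⟨sSup (Complex.re '' S), sSup (Complex.im '' {z ∈ S | z.re = sSup (Complex.re '' S)})⟩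

/-- The element of `S` minimizing the real part, ties broken by minimal imaginary part. -/
def lexMinGain (S : Set ℂ) : ℂ :=
  ⟨sInf (Complex.re '' S), sInf (Complex.im '' {z ∈ S | z.re = sInf (Complex.re '' S)})⟩

/-- The maximum gain distance matrix `D^max_<(Φ)` with respect to a strict order `lt`. -/
def Dmax [Fintype V] [DecidableEq V] (G : SimpleGraph V) (φ : V → V → ℂ)
    (lt : V → V → Prop) : Matrix V V ℂ := fun s t =>
  if lt s t then lexMaxGain (shortestGains G φ s t) * (G.dist s t : ℂ)
  else if lt t s then (starRingEnd ℂ) (lexMaxGain (shortestGains G φ t s)) * (G.dist s t : ℂ)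
  else 0

/-- The minimum gain distance matrix `D^min_<(Φ)` with respect to a strict order `lt`. -/
def Dmin [Fintype V] [DecidableEq V] (G : SimpleGraph V) (φ : V → V → ℂ)
    (lt : V → V → Prop) : Matrix V V ℂ := fun s t =>
  if lt s t then lexMinGain (shortestGains G φ s t) * (G.dist s t : ℂ)
  else if lt t s then (starRingEnd ℂ) (lexMinGain (shortestGains G φ t s)) * (G.dist s t : ℂ)
  else 0

/-- Vertex order independence: the gain distance matrices agree for the standard order
and its reverse. -/
def OrderIndependent [Fintype V] [DecidableEq V] [LinearOrder V] (G : SimpleGraph V)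
    (φ : V → V → ℂ) : Prop :=
  Dmax G φ (· < ·) = Dmax G φ (fun a b => b < a) ∧
  Dmin G φ (· < ·) = Dmin G φ (fun a b => b < a)

/-- The largest (real) eigenvalue of a matrix. -/
def maxEig [Fintype V] [DecidableEq V] (A : Matrix V V ℂ) : ℝ :=
  sSup {r : ℝ | (r : ℂ) ∈ spectrum ℂ A}

/-- The spectral radius of a matrix. -/
def specRad [Fintype V] [DecidableEq V] (A : Matrix V V ℂ) : ℝ :=
  sSup {r : ℝ | ∃ z ∈ spectrum ℂ A, ‖z‖ = r}

/-- The distance matrix of the underlying graph, as a complex matrix. -/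
def distMatrix [Fintype V] [DecidableEq V] (G : SimpleGraph V) : Matrix V V ℂ :=
  fun i j => (G.dist i j : ℂ)

/-- Weighted gain adjacency matrix `A(Φ_w)`. -/
def wGainAdj [Fintype V] [DecidableEq V] (G : SimpleGraph V) (φ : V → V → ℂ)
    (w : V → V → ℝ) : Matrix V V ℂ := fun i j => if G.Adj i j then φ i j * (w i j : ℂ) else 0

/-- Weighted adjacency matrix `A(G_w)` of the underlying weighted graph. -/
def wAdj [Fintype V] [DecidableEq V] (G : SimpleGraph V) (w : V → V → ℝ) :
    Matrix V V ℂ := fun i j => if G.Adj i j then (w i j : ℂ) else 0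


section Aux

open SimpleGraph

variable {V : Type*} {G : SimpleGraph V} {φ : V → V → ℂ}

@[simp] lemma walkGain_nil {u : V} : walkGain φ (SimpleGraph.Walk.nil : G.Walk u u) = 1 := rfl

lemma walkGain_cons {u v w : V} (h : G.Adj u v) (p : G.Walk v w) :
    walkGain φ (SimpleGraph.Walk.cons h p) = φ u v * walkGain φ p := by
  simp [walkGain]

lemma walkGain_append {u v w : V} (p : G.Walk u v) (q : G.Walk v w) :
    walkGain φ (p.append q) = walkGain φ p * walkGain φ q := by
  simp [walkGain, SimpleGraph.Walk.darts_append]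

lemma edge_gain_ne_zero (hφ : IsGain G φ) {u v : V} (h : G.Adj u v) : φ u v ≠ 0 := by
  intro h0
  have := hφ.1 u v h
  rw [h0] at this
  simp at this

lemma walkGain_ne_zero (hφ : IsGain G φ) {u v : V} (p : G.Walk u v) : walkGain φ p ≠ 0 := by
  induction p with
  | nil => simp
  | cons h p ih =>
    rw [walkGain_cons]
    exact mul_ne_zero (edge_gain_ne_zero hφ h) ih

lemma walkGain_reverse (hφ : IsGain G φ) {u v : V} (p : G.Walk u v) :
    walkGain φ p.reverse = (walkGain φ p)⁻¹ := by
  induction p with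
  | nil => simp
  | @cons u x v h p ih =>
    rw [SimpleGraph.Walk.reverse_cons, walkGain_append, walkGain_cons, ih, walkGain_cons,
      walkGain_nil, hφ.2 u x h, _root_.mul_inv_rev]
    ring

lemma walkGain_rotate {u w : V} (c : G.Walk u u) (hw : w ∈ c.support) :
    walkGain φ (c.rotate w hw) = walkGain φ c := by
  unfold walkGain
  exact ((c.rotate_darts w hw).map _).perm.prod_eq

/-- Every closed walk in a balanced gain graph has gain 1. -/
lemma closed_walkGain_eq_one (hφ : IsGain G φ) (hb : GBalanced G φ) :
    ∀ (n : ℕ) (u : V) (c : G.Walk u u), c.length = n → walkGain φ c = 1 := by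
  intro n
  induction n using Nat.strong_induction_on with
  | _ n ih =>
  intro u c hc
  cases c with
  | nil => simp
  | @cons _ v _ h p =>
    by_cases hnd : p.support.Nodup
    · -- p is a path
      have hp : p.IsPath := (SimpleGraph.Walk.isPath_def p).2 hnd
      by_cases he : s(u, v) ∈ p.edges
      · -- the edge of h appears in p: then p has length 1 (a backtrack)
        rw [SimpleGraph.Walk.edges, List.mem_map] at he
        obtain ⟨d, hd, hde⟩ := he
        have hcases : d.toProd = (u, v) ∨ d.toProd = (v, u) := by
          have := hde
          rw [SimpleGraph.Dart.edge, Sym2.eq_iff] at this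
          rcases this with ⟨h1, h2⟩ | ⟨h1, h2⟩
          · left; exact Prod.ext h1 h2
          · right; exact Prod.ext h1 h2
        rcases hcases with hdp | hdp
        · -- d.fst = u = last vertex of p: impossible in a path
          exfalso
          have hfst : u ∈ p.darts.map (·.fst) := by
            rw [List.mem_map]
            exact ⟨d, hd, by rw [hdp]⟩
          rw [SimpleGraph.Walk.map_fst_darts] at hfst
          have hsplit := List.dropLast_append_getLast (p.support_ne_nil)
          rw [p.getLast_support] at hsplit
          have hnodup : (p.support.dropLast ++ [u]).Nodup := by rw [hsplit]; exact hnd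
          exact (List.disjoint_of_nodup_append hnodup) hfst (List.mem_singleton_self u)
        · -- d = (v, u): must be the first dart, so p = cons h' nil
          cases p with
          | nil => simp at hd
          | @cons _ x _ h' q =>
            rw [SimpleGraph.Walk.darts_cons, List.mem_cons] at hd
            rcases hd with hd | hd
            · -- first dart: x = u, so q : Walk u u is a path, hence nil
              have hx : x = u := by
                rw [hd] at hdp
                have := congrArg Prod.snd hdp
                simpa using this
              subst hx
              cases q with
              | nil =>
                -- c = u - v - u : backtrack
                rw [walkGain_cons, walkGain_cons, walkGain_nil, hφ.2 _ _ h, mul_one,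
                  mul_inv_cancel₀ (edge_gain_ne_zero hφ h)]
              | cons h'' r =>
                exfalso
                rw [SimpleGraph.Walk.support_cons, List.nodup_cons] at hnd
                have hnd2 := hnd.2
                rw [SimpleGraph.Walk.support_cons, List.nodup_cons] at hnd2
                exact hnd2.1 r.end_mem_support
            · -- d in q.darts: v = d.fst ∈ q.support, contradicting nodup
              exfalso
              have : v ∈ q.support := by
                have := SimpleGraph.Walk.dart_fst_mem_support_of_mem_darts q hd
                rwa [hdp] at this
              rw [SimpleGraph.Walk.support_cons, List.nodup_cons] at hnd
              exact hnd.1 this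
      · exact hb u (SimpleGraph.Walk.cons h p)
          ((SimpleGraph.Walk.cons_isCycle_iff p h).2 ⟨hp, he⟩)
    · -- a vertex repeats: rotate and split
      obtain ⟨w, hw2⟩ : ∃ w, 2 ≤ p.support.count w := by
        by_contra hcon
        push_neg at hcon
        exact hnd (List.nodup_iff_count_le_one.2 fun a => by
          have := hcon a; omega)
      have hn : 1 ≤ n := by rw [← hc, SimpleGraph.Walk.length_cons]; omega
      have hwsup : w ∈ (SimpleGraph.Walk.cons h p).support := by
        rw [SimpleGraph.Walk.support_cons, List.mem_cons]
        exact Or.inr (List.count_pos_iff.1 (by omega))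
      have hgain := walkGain_rotate (φ := φ) (SimpleGraph.Walk.cons h p) hwsup
      have hlen : ((SimpleGraph.Walk.cons h p).rotate w hwsup).length = n := by
        rw [← hc, ← SimpleGraph.Walk.length_darts, ← SimpleGraph.Walk.length_darts]
        exact ((SimpleGraph.Walk.cons h p).rotate_darts w hwsup).perm.length_eq
      have hcount : 2 ≤ ((SimpleGraph.Walk.cons h p).rotate w hwsup).support.tail.count w := by
        rw [((SimpleGraph.Walk.cons h p).support_rotate w hwsup).perm.count_eq,
          SimpleGraph.Walk.support_cons, List.tail_cons]
        exact hw2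
      rw [← hgain]
      set c1 := (SimpleGraph.Walk.cons h p).rotate w hwsup with hc1
      clear_value c1
      clear hgain hc1 hc hnd hw2 hwsup
      cases c1 with
      | nil => simp at hcount
      | @cons _ x _ h2 p2 =>
        rw [SimpleGraph.Walk.support_cons, List.tail_cons] at hcount
        have hwp2 : w ∈ p2.support := List.count_pos_iff.1 (by omega)
        have hsplit := p2.take_spec hwp2
        have hct : (p2.takeUntil w hwp2).support.count w = 1 :=
          p2.count_support_takeUntil_eq_one hwp2
        have hcdr : 1 ≤ (p2.dropUntil w hwp2).support.tail.count w := by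
          have hps : p2.support =
              (p2.takeUntil w hwp2).support ++ (p2.dropUntil w hwp2).support.tail := by
            conv_lhs => rw [← hsplit]
            rw [SimpleGraph.Walk.support_append]
          rw [hps, List.count_append, hct] at hcount
          omega
        have hdrlen : 1 ≤ (p2.dropUntil w hwp2).length := by
          by_contra hcon
          push_neg at hcon
          have hdl : (p2.dropUntil w hwp2).length = 0 := by omega
          have hsl := (p2.dropUntil w hwp2).length_support
          rw [hdl] at hsl
          have : (p2.dropUntil w hwp2).support.tail = [] := by
            cases hsup : (p2.dropUntil w hwp2).support with
            | nil => exact absurd hsup (p2.dropUntil w hwp2).support_ne_nil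
            | cons a l =>
              rw [hsup] at hsl
              simp only [List.length_cons] at hsl
              have : l = [] := List.eq_nil_of_length_eq_zero (by omega)
              simp [this]
          rw [this] at hcdr
          simp at hcdr
        have hlensum : (p2.takeUntil w hwp2).length + (p2.dropUntil w hwp2).length
            = p2.length := by
          have := congrArg SimpleGraph.Walk.length hsplit
          rwa [SimpleGraph.Walk.length_append] at this
        rw [SimpleGraph.Walk.length_cons] at hlen
        have hdecomp : SimpleGraph.Walk.cons h2 p2 =
            (SimpleGraph.Walk.cons h2 (p2.takeUntil w hwp2)).append (p2.dropUntil w hwp2) := by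
          rw [SimpleGraph.Walk.cons_append, hsplit]
        rw [hdecomp, walkGain_append]
        have e1 : walkGain φ (SimpleGraph.Walk.cons h2 (p2.takeUntil w hwp2)) = 1 := by
          apply ih (1 + (p2.takeUntil w hwp2).length) (by omega) w
          rw [SimpleGraph.Walk.length_cons]; omega
        have e2 : walkGain φ (p2.dropUntil w hwp2) = 1 := by
          apply ih (p2.dropUntil w hwp2).length (by omega) w
          rfl
        rw [e1, e2, one_mul]

end Aux

set_option maxHeartbeats 1000000 in
/-- a gain graph on a connected bipartite graph is distance compatible iff it
is balanced. -/
theorem bipartite_distCompatible_iff_balanced {V : Type*} (G : SimpleGraph V)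
    (hconn : G.Connected) (hbip : G.Colorable 2) (φ : V → V → ℂ) (hφ : IsGain G φ) :
    DistCompatible G φ ↔ GBalanced G φ := by
  constructor
  · -- distance compatible → balanced
    intro hdc
    obtain ⟨C⟩ := hbip
    have hne : Nonempty V := hconn.nonempty
    obtain ⟨r⟩ := hne
    choose sp hsp using fun v => hconn.exists_walk_length_eq_dist r v
    set θ : V → ℂ := fun v => walkGain φ (sp v) with hθ
    have hθne : ∀ v, θ v ≠ 0 := fun v => walkGain_ne_zero hφ (sp v)
    -- parity of walk lengths in a bipartite graph
    have fin2a : ∀ x y z : Fin 2, x ≠ y → (x = z ↔ ¬ y = z) := by decide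
    have fin2b : ∀ x y z : Fin 2, (x = y ↔ x = z) → y = z := by decide
    have parity : ∀ {a b : V} (pw : G.Walk a b), (C a = C b ↔ Even pw.length) := by
      intro a b pw
      induction pw with
      | nil => simp
      | @cons a x b h pw ih =>
        have hne := C.valid h
        rw [SimpleGraph.Walk.length_cons, Nat.even_add_one, ← ih]
        exact fin2a _ _ _ hne
    -- distances of adjacent vertices differ by exactly one
    have hdiff : ∀ a b : V, G.Adj a b → G.dist r b = G.dist r a + 1 ∨
        G.dist r a = G.dist r b + 1 := by
      intro a b hab
      have h1 : G.dist r b ≤ G.dist r a + 1 := by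
        have := hconn.dist_triangle (u := r) (v := a) (w := b)
        rwa [(SimpleGraph.dist_eq_one_iff_adj).2 hab] at this
      have h2 : G.dist r a ≤ G.dist r b + 1 := by
        have := hconn.dist_triangle (u := r) (v := b) (w := a)
        rwa [(SimpleGraph.dist_eq_one_iff_adj).2 hab.symm] at this
      have hneq : G.dist r a ≠ G.dist r b := by
        intro heq
        have pa : (C r = C a ↔ Even (G.dist r a)) := by rw [← hsp a]; exact parity (sp a)
        have pb : (C r = C b ↔ Even (G.dist r b)) := by rw [← hsp b]; exact parity (sp b)
        have : (C r = C a ↔ C r = C b) := by rw [pa, pb, heq]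
        exact C.valid hab (fin2b _ _ _ this)
      omega
    -- the potential identity on edges, one direction
    have step : ∀ a b : V, G.Adj a b → G.dist r b = G.dist r a + 1 →
        φ a b = (θ a)⁻¹ * θ b := by
      intro a b hab hdist
      have h2 : ((sp a).concat hab).length = G.dist r b := by
        rw [SimpleGraph.Walk.length_concat, hsp a, hdist]
      have h3 := hdc r b ((sp a).concat hab) (sp b) h2 (hsp b)
      rw [SimpleGraph.Walk.concat_eq_append, walkGain_append, walkGain_cons, walkGain_nil,
        mul_one] at h3
      -- h3 : θ a * φ a b = θ b
      have h3' : θ a * φ a b = θ b := h3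
      rw [← h3', ← mul_assoc, inv_mul_cancel₀ (hθne a), one_mul]
    have key : ∀ a b : V, G.Adj a b → φ a b = (θ a)⁻¹ * θ b := by
      intro a b hab
      rcases hdiff a b hab with hd | hd
      · exact step a b hab hd
      · have h1 := step b a hab.symm hd
        have h2 : φ a b = (φ b a)⁻¹ := hφ.2 b a hab.symm
        rw [h2, h1, _root_.mul_inv_rev, inv_inv, mul_comm]
    -- telescoping
    have tel : ∀ {a b : V} (pw : G.Walk a b), walkGain φ pw = (θ a)⁻¹ * θ b := by
      intro a b pw
      induction pw with
      | nil => rw [walkGain_nil, inv_mul_cancel₀ (hθne _)]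
      | @cons a x b h pw ih =>
        rw [walkGain_cons, ih, key a x h]
        have hxx : θ x * (θ x)⁻¹ = 1 := mul_inv_cancel₀ (hθne x)
        calc (θ a)⁻¹ * θ x * ((θ x)⁻¹ * θ b)
            = (θ a)⁻¹ * ((θ x * (θ x)⁻¹) * θ b) := by ring
          _ = (θ a)⁻¹ * θ b := by rw [hxx, one_mul]
    intro u c _
    rw [tel c, inv_mul_cancel₀ (hθne u)]
  · -- balanced → distance compatible
    intro hb s t p q hp hq
    have h1 : walkGain φ (p.append q.reverse) = 1 :=
      closed_walkGain_eq_one hφ hb _ s (p.append q.reverse) rfl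
    rw [walkGain_append, walkGain_reverse hφ] at h1
    rw [← div_eq_one_iff_eq (walkGain_ne_zero hφ q), div_eq_mul_inv]
    exact h1

end GG
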